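/- The set 𝒢₁ = { x_a x_b : a < b } ∪ { Σ_a x_a² − 1 } ∪ { x_a³ − x_a : a > (1,...,1) } is a reduced Gröbner basis, with respect to grevlex, of the ideal I₁ = ⟨ x_a³ − x_a, x_a x_b (a ≠ b), Σ_a x_a² − 1 ⟩ in ℝ[x_a : a ∈ [𝐧]]. -/

import Mathlib

open MvPolynomial

/-- Multi-index set `[n₁] × ⋯ × [n_d]`. -/
abbrev Idx {d : ℕ} (n : Fin d → ℕ) : Type := ∀ i, Fin (n i)

/-- Componentwise minimum of multi-indices. -/
def amin {d : ℕ} {n : Fin d → ℕ} (a b : Idx n) : Idx n := fun i => min (a i) (b i)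

/-- Componentwise maximum of multi-indices. -/
def amax {d : ℕ} {n : Fin d → ℕ} (a b : Idx n) : Idx n := fun i => max (a i) (b i)

/-- Lexicographic order on multi-indices: `a < b` iff at the first position where they
differ, `a` is smaller.  (With this convention the variable `x_a` is *larger* in the
variable order `x_{1⋯1} > x_{1⋯2} > ⋯ > x_{n₁⋯n_d}` exactly when `a` is lexicographically
smaller.) -/
def idxLt {d : ℕ} {n : Fin d → ℕ} (a b : Idx n) : Prop :=
  ∃ i, a i < b i ∧ ∀ j, j < i → a j = b j

/-- Total degree of an exponent vector. -/
def expDeg {σ : Type*} (α : σ →₀ ℕ) : ℕ := α.sum fun _ k => k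

/-- The graded reverse lexicographic order on exponent vectors (viewing the variable
`x_a` with lexicographically smaller index `a` as the larger variable): `α < β` iff
`deg α < deg β`, or the degrees agree and at the largest (in the variable order, i.e.
lexicographically largest) index where they differ, `α` has the *larger* exponent. -/
def grevlexLt {d : ℕ} {n : Fin d → ℕ} (α β : Idx n →₀ ℕ) : Prop :=
  expDeg α < expDeg β ∨
    (expDeg α = expDeg β ∧ ∃ j, β j < α j ∧ ∀ k, idxLt j k → α k = β k)

/-- `m` is the leading monomial (w.r.t. grevlex) of the polynomial `f`. -/
def IsLeadMon {d : ℕ} {n : Fin d → ℕ} (f : MvPolynomial (Idx n) ℝ)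
    (m : Idx n →₀ ℕ) : Prop :=
  m ∈ f.support ∧ ∀ m' ∈ f.support, m' ≠ m → grevlexLt m' m

/-- `G` is a Gröbner basis of the ideal `I` w.r.t. grevlex: `G` generates `I` and the
leading monomial of every nonzero element of `I` is divisible by the leading monomial of
some element of `G`. -/
def IsGroebnerBasis {d : ℕ} {n : Fin d → ℕ} (G : Set (MvPolynomial (Idx n) ℝ))
    (I : Ideal (MvPolynomial (Idx n) ℝ)) : Prop :=
  Ideal.span G = I ∧
    ∀ f ∈ I, f ≠ 0 → ∀ m, IsLeadMon f m →
      ∃ g ∈ G, ∃ mg, IsLeadMon g mg ∧ mg ≤ m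

/-- `G` is a *reduced* Gröbner basis of `I`: it is a Gröbner basis, every element is monic,
and no monomial of an element of `G` is divisible by the leading monomial of another
element of `G`. -/
def IsReducedGroebnerBasis {d : ℕ} {n : Fin d → ℕ} (G : Set (MvPolynomial (Idx n) ℝ))
    (I : Ideal (MvPolynomial (Idx n) ℝ)) : Prop :=
  IsGroebnerBasis G I ∧
    ∀ g ∈ G, (∀ m, IsLeadMon g m → coeff m g = 1) ∧
      ∀ m ∈ g.support, ∀ g' ∈ G, g' ≠ g → ∀ m', IsLeadMon g' m' → ¬ m' ≤ m

/-- The set of rank-1 binomials `x_a x_b − x_{a∧b} x_{a∨b}`. -/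
noncomputable def rk1Binomials {d : ℕ} (n : Fin d → ℕ) : Set (MvPolynomial (Idx n) ℝ) :=
  {f | ∃ a b : Idx n, f = X a * X b - X (amin a b) * X (amax a b)}

/-- The ideal `I₀` generated by all rank-1 binomials. -/
noncomputable def I0 {d : ℕ} (n : Fin d → ℕ) : Ideal (MvPolynomial (Idx n) ℝ) :=
  Ideal.span (rk1Binomials n)

/-- The reduced Gröbner basis `𝒢₀` of `I₀`. -/
noncomputable def G0 {d : ℕ} (n : Fin d → ℕ) : Set (MvPolynomial (Idx n) ℝ) :=
  {f | ∃ a b : Idx n, idxLt a b ∧ (∃ i, b i < a i) ∧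
    f = X a * X b - X (amin a b) * X (amax a b)}

variable {d : ℕ} (n : Fin d → ℕ) [∀ i, NeZero (n i)]

/-- The smallest multi-index `(1,…,1)`. -/
def botIdx {d : ℕ} (n : Fin d → ℕ) [∀ i, NeZero (n i)] : Idx n := fun i => (0 : Fin (n i))

/-- The ideal `I₁ = ⟨x_a³ − x_a, x_a x_b (a ≠ b), Σ_a x_a² − 1⟩`. -/
noncomputable def I1 {d : ℕ} (n : Fin d → ℕ) : Ideal (MvPolynomial (Idx n) ℝ) :=
  Ideal.span ({f | ∃ a : Idx n, f = X a ^ 3 - X a} ∪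
    {f | ∃ a b : Idx n, a ≠ b ∧ f = X a * X b} ∪
    {(∑ a : Idx n, X a ^ 2) - 1})

/-- `𝒢₁ = {x_a x_b : a < b} ∪ {Σ_a x_a² − 1} ∪ {x_a³ − x_a : a > (1,…,1)}`. -/
noncomputable def G1 {d : ℕ} (n : Fin d → ℕ) [∀ i, NeZero (n i)] :
    Set (MvPolynomial (Idx n) ℝ) :=
  {f | ∃ a b : Idx n, idxLt a b ∧ f = X a * X b} ∪
    {(∑ a : Idx n, X a ^ 2) - 1} ∪
    {f | ∃ a : Idx n, idxLt (botIdx n) a ∧ f = X a ^ 3 - X a}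

section Helpers

open Finsupp Classical

variable {d : ℕ} {n : Fin d → ℕ}

lemma idxLt_irrefl (a : Idx n) : ¬ idxLt a a := by
  rintro ⟨i, hi, -⟩; exact lt_irrefl _ hi

lemma idxLt_trichotomy (a b : Idx n) (hab : a ≠ b) : idxLt a b ∨ idxLt b a := by
  have hne : (Finset.univ.filter (fun i => a i ≠ b i)).Nonempty := by
    by_contra h
    apply hab
    funext i
    by_contra hi
    exact h ⟨i, Finset.mem_filter.2 ⟨Finset.mem_univ _, hi⟩⟩
  set s := Finset.univ.filter (fun i => a i ≠ b i)
  set i := s.min' hne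
  have hi : a i ≠ b i := (Finset.mem_filter.1 (s.min'_mem hne)).2
  have hmin : ∀ j, j < i → a j = b j := by
    intro j hj
    by_contra hj'
    exact absurd (s.min'_le j (Finset.mem_filter.2 ⟨Finset.mem_univ _, hj'⟩)) (not_le.2 hj)
  rcases lt_or_gt_of_ne hi with h | h
  · exact Or.inl ⟨i, h, hmin⟩
  · exact Or.inr ⟨i, h, fun j hj => (hmin j hj).symm⟩

variable [∀ i, NeZero (n i)]

lemma not_idxLt_bot (a : Idx n) : ¬ idxLt a (botIdx n) := by
  rintro ⟨i, hi, -⟩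
  exact absurd hi (by simp [botIdx, Fin.le_def, Fin.lt_def])

lemma idxLt_bot_iff (a : Idx n) : idxLt (botIdx n) a ↔ a ≠ botIdx n := by
  constructor
  · rintro h rfl; exact idxLt_irrefl _ h
  · intro h
    rcases idxLt_trichotomy (botIdx n) a (Ne.symm h) with h' | h'
    · exact h'
    · exact absurd h' (not_idxLt_bot a)

end Helpers
section Helpers2
variable {σ : Type*}

lemma expDeg_single (a : σ) (k : ℕ) : expDeg (Finsupp.single a k) = k := by
  simp [expDeg, Finsupp.sum_single_index]

lemma expDeg_zero : expDeg (0 : σ →₀ ℕ) = 0 := by simp [expDeg]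

lemma expDeg_add (α β : σ →₀ ℕ) : expDeg (α + β) = expDeg α + expDeg β := by
  simp [expDeg, Finsupp.sum_add_index']

lemma expDeg_eq_zero {α : σ →₀ ℕ} (h : expDeg α = 0) : α = 0 := by
  ext i
  simp only [Finsupp.coe_zero, Pi.zero_apply]
  by_contra hi
  have hmem : i ∈ α.support := Finsupp.mem_support_iff.2 hi
  have : α i ≤ expDeg α := Finset.single_le_sum (f := fun j => α j) (fun _ _ => Nat.zero_le _) hmem
  omega

lemma expDeg_mono {α β : σ →₀ ℕ} (h : α ≤ β) : expDeg α ≤ expDeg β := by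
  rcases le_iff_exists_add.1 h with ⟨γ, rfl⟩
  simp [expDeg_add]

lemma eq_of_le_of_expDeg_eq {α β : σ →₀ ℕ} (h : α ≤ β) (hd : expDeg α = expDeg β) :
    α = β := by
  rcases le_iff_exists_add.1 h with ⟨γ, rfl⟩
  rw [expDeg_add] at hd
  have : γ = 0 := expDeg_eq_zero (by omega)
  simp [this]

lemma single_le_iff {a : σ} {k : ℕ} {m : σ →₀ ℕ} : Finsupp.single a k ≤ m ↔ k ≤ m a := by
  constructor
  · intro h; simpa using (Finsupp.le_def.1 h) a
  · intro h
    rw [Finsupp.le_def]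
    intro i
    rcases eq_or_ne a i with rfl | hi
    · rwa [Finsupp.single_eq_same]
    · calc (Finsupp.single a k) i = 0 := Finsupp.single_eq_of_ne' hi
        _ ≤ m i := Nat.zero_le _

end Helpers2
section Helpers3
variable {d : ℕ} {n : Fin d → ℕ}

lemma grevlexLt_expDeg {α β : Idx n →₀ ℕ} (h : grevlexLt α β) : expDeg α ≤ expDeg β := by
  rcases h with h | ⟨h, -⟩
  · exact le_of_lt h
  · exact le_of_eq h

lemma grevlexLt_asymm {α β : Idx n →₀ ℕ} (h : grevlexLt α β) (h' : grevlexLt β α) : False := by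
  rcases h with h | ⟨hd, j, hj, hja⟩
  · rcases h' with h' | ⟨hd', -⟩ <;> omega
  · rcases h' with h' | ⟨hd', j', hj', hja'⟩
    · omega
    · rcases eq_or_ne j j' with rfl | hne
      · omega
      · rcases idxLt_trichotomy j j' hne with hlt | hlt
        · have := hja j' hlt; omega
        · have := hja' j hlt; omega

lemma leadMon_unique {f : MvPolynomial (Idx n) ℝ} {m m' : Idx n →₀ ℕ}
    (h : IsLeadMon f m) (h' : IsLeadMon f m') : m = m' := by
  by_contra hne
  exact grevlexLt_asymm (h'.2 m h.1 hne) (h.2 m' h'.1 (Ne.symm hne))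

lemma isLeadMon_monomial {m : Idx n →₀ ℕ} {c : ℝ} (hc : c ≠ 0) :
    IsLeadMon (monomial m c) m := by
  constructor
  · rw [MvPolynomial.support_monomial, if_neg hc]; exact Finset.mem_singleton_self m
  · intro m' hm' hne
    rw [MvPolynomial.support_monomial, if_neg hc, Finset.mem_singleton] at hm'
    exact absurd hm' hne

end Helpers3
section Helpers4
variable {d : ℕ} {n : Fin d → ℕ}

lemma XX_eq (a b : Idx n) :
    (X a * X b : MvPolynomial (Idx n) ℝ) =
      monomial (Finsupp.single a 1 + Finsupp.single b 1) 1 := by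
  rw [MvPolynomial.X, MvPolynomial.X, MvPolynomial.monomial_mul, one_mul]

lemma isLeadMon_XX (a b : Idx n) :
    IsLeadMon (X a * X b) (Finsupp.single a 1 + Finsupp.single b 1) := by
  rw [XX_eq]; exact isLeadMon_monomial one_ne_zero

lemma coeff_cubic (a : Idx n) (m : Idx n →₀ ℕ) :
    coeff m (X a ^ 3 - X a : MvPolynomial (Idx n) ℝ) =
      (if Finsupp.single a 3 = m then 1 else 0) -
        (if Finsupp.single a 1 = m then 1 else 0) := by
  rw [MvPolynomial.coeff_sub, MvPolynomial.X_pow_eq_monomial,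
    MvPolynomial.coeff_monomial, MvPolynomial.coeff_X']

lemma single_a_ne (a : Idx n) {k l : ℕ} (h : k ≠ l) :
    Finsupp.single a k ≠ Finsupp.single a l := by
  intro hkl
  have := DFunLike.congr_fun hkl a
  simp [Finsupp.single_eq_same] at this
  exact h this

lemma mem_support_cubic {a : Idx n} {m : Idx n →₀ ℕ}
    (h : m ∈ (X a ^ 3 - X a : MvPolynomial (Idx n) ℝ).support) :
    m = Finsupp.single a 3 ∨ m = Finsupp.single a 1 := by
  rw [MvPolynomial.mem_support_iff, coeff_cubic] at h
  by_contra hc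
  push_neg at hc
  rw [if_neg (fun h' => hc.1 h'.symm), if_neg (fun h' => hc.2 h'.symm)] at h
  simp at h

lemma isLeadMon_cubic (a : Idx n) :
    IsLeadMon (X a ^ 3 - X a : MvPolynomial (Idx n) ℝ) (Finsupp.single a 3) := by
  constructor
  · rw [MvPolynomial.mem_support_iff, coeff_cubic, if_pos rfl,
      if_neg (single_a_ne a (by norm_num))]
    norm_num
  · intro m' hm' hne
    rcases mem_support_cubic hm' with rfl | rfl
    · exact absurd rfl hne
    · left; rw [expDeg_single, expDeg_single]; norm_num

lemma coeff_S (m : Idx n →₀ ℕ) :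
    coeff m ((∑ a : Idx n, X a ^ 2) - 1 : MvPolynomial (Idx n) ℝ) =
      (∑ a : Idx n, if Finsupp.single a 2 = m then (1:ℝ) else 0) -
        (if 0 = m then 1 else 0) := by
  rw [MvPolynomial.coeff_sub, MvPolynomial.coeff_sum, MvPolynomial.coeff_one]
  congr 1
  refine Finset.sum_congr rfl fun a _ => ?_
  rw [MvPolynomial.X_pow_eq_monomial, MvPolynomial.coeff_monomial]

lemma single_two_injective (a b : Idx n) (h : Finsupp.single a 2 = Finsupp.single b 2) :
    a = b := by
  by_contra hne
  have := DFunLike.congr_fun h a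
  rw [Finsupp.single_eq_same, Finsupp.single_eq_of_ne' (Ne.symm hne)] at this
  exact absurd this (by norm_num)

lemma coeff_S_sq (c : Idx n) :
    coeff (Finsupp.single c 2) ((∑ a : Idx n, X a ^ 2) - 1 : MvPolynomial (Idx n) ℝ) = 1 := by
  rw [coeff_S]
  rw [if_neg (fun h => (fun hh => (by norm_num : (2:ℕ) ≠ 0) (Finsupp.single_eq_zero.1 hh)) h.symm)]
  rw [Finset.sum_eq_single c]
  · simp
  · intro b _ hb
    exact if_neg fun h => hb (single_two_injective b c h)
  · intro h; exact absurd (Finset.mem_univ c) h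

lemma coeff_S_zero :
    coeff 0 ((∑ a : Idx n, X a ^ 2) - 1 : MvPolynomial (Idx n) ℝ) = -1 := by
  rw [coeff_S, if_pos rfl]
  rw [Finset.sum_eq_zero, zero_sub]
  intro a _
  exact if_neg fun h => (fun hh => (by norm_num : (2:ℕ) ≠ 0) (Finsupp.single_eq_zero.1 hh)) h

lemma mem_support_S {m : Idx n →₀ ℕ}
    (h : m ∈ ((∑ a : Idx n, X a ^ 2) - 1 : MvPolynomial (Idx n) ℝ).support) :
    m = 0 ∨ ∃ a, m = Finsupp.single a 2 := by
  by_contra hc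
  push_neg at hc
  rw [MvPolynomial.mem_support_iff, coeff_S] at h
  apply h
  rw [if_neg (fun h' => hc.1 h'.symm), Finset.sum_eq_zero, sub_zero]
  intro a _
  exact if_neg fun h' => hc.2 a h'.symm

end Helpers4
section Helpers5
variable {d : ℕ} {n : Fin d → ℕ} [∀ i, NeZero (n i)]

lemma isLeadMon_S :
    IsLeadMon ((∑ a : Idx n, X a ^ 2) - 1 : MvPolynomial (Idx n) ℝ)
      (Finsupp.single (botIdx n) 2) := by
  constructor
  · rw [MvPolynomial.mem_support_iff, coeff_S_sq]; norm_num
  · intro m' hm' hne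
    rcases mem_support_S hm' with rfl | ⟨a, rfl⟩
    · left; rw [expDeg_zero, expDeg_single]; norm_num
    · have ha : a ≠ botIdx n := by
        intro h; exact hne (by rw [h])
      right
      refine ⟨by rw [expDeg_single, expDeg_single], a, ?_, ?_⟩
      · rw [Finsupp.single_eq_same, Finsupp.single_eq_of_ne' (Ne.symm ha)]
        norm_num
      · intro k hk
        have hka : k ≠ a := by rintro rfl; exact idxLt_irrefl _ hk
        have hkb : k ≠ botIdx n := by rintro rfl; exact not_idxLt_bot _ hk
        rw [Finsupp.single_eq_of_ne' (Ne.symm hka), Finsupp.single_eq_of_ne' (Ne.symm hkb)]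

end Helpers5
set_option linter.unusedSectionVars false
section Helpers6
variable {d : ℕ} {n : Fin d → ℕ} [∀ i, NeZero (n i)]

lemma mem_G1_XX {a b : Idx n} (h : idxLt a b) : (X a * X b : MvPolynomial (Idx n) ℝ) ∈ G1 n :=
  Or.inl (Or.inl ⟨a, b, h, rfl⟩)

lemma mem_G1_S : ((∑ a : Idx n, X a ^ 2) - 1 : MvPolynomial (Idx n) ℝ) ∈ G1 n :=
  Or.inl (Or.inr rfl)

lemma mem_G1_cubic {a : Idx n} (h : idxLt (botIdx n) a) :
    (X a ^ 3 - X a : MvPolynomial (Idx n) ℝ) ∈ G1 n :=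
  Or.inr ⟨a, h, rfl⟩

lemma mem_I1_cubic (a : Idx n) : (X a ^ 3 - X a : MvPolynomial (Idx n) ℝ) ∈ I1 n :=
  Ideal.subset_span (Or.inl (Or.inl ⟨a, rfl⟩))

lemma mem_I1_XX {a b : Idx n} (h : a ≠ b) : (X a * X b : MvPolynomial (Idx n) ℝ) ∈ I1 n :=
  Ideal.subset_span (Or.inl (Or.inr ⟨a, b, h, rfl⟩))

lemma mem_I1_S : ((∑ a : Idx n, X a ^ 2) - 1 : MvPolynomial (Idx n) ℝ) ∈ I1 n :=
  Ideal.subset_span (Or.inr rfl)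

lemma idxLt_ne {a b : Idx n} (h : idxLt a b) : a ≠ b := by
  rintro rfl; exact idxLt_irrefl _ h

lemma bot_cubic_mem_spanG1 :
    (X (botIdx n) ^ 3 - X (botIdx n) : MvPolynomial (Idx n) ℝ) ∈ Ideal.span (G1 n) := by
  have key : (X (botIdx n) ^ 3 - X (botIdx n) : MvPolynomial (Idx n) ℝ) =
      X (botIdx n) * ((∑ a : Idx n, X a ^ 2) - 1) -
        ∑ a ∈ Finset.univ.erase (botIdx n), X (botIdx n) * X a * X a := by
    rw [mul_sub, mul_one, Finset.mul_sum]
    rw [← Finset.add_sum_erase _ (fun a => (X (botIdx n) : MvPolynomial (Idx n) ℝ) * X a ^ 2)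
      (Finset.mem_univ (botIdx n))]
    rw [Finset.sum_congr rfl
      (fun a _ => by ring : ∀ a ∈ Finset.univ.erase (botIdx n),
        (X (botIdx n) : MvPolynomial (Idx n) ℝ) * X a * X a = X (botIdx n) * X a ^ 2)]
    ring
  rw [key]
  apply Ideal.sub_mem
  · exact Ideal.mul_mem_left _ _ (Ideal.subset_span mem_G1_S)
  · apply Ideal.sum_mem
    intro a ha
    have hab : a ≠ botIdx n := (Finset.mem_erase.1 ha).1
    exact Ideal.mul_mem_right _ _
      (Ideal.subset_span (mem_G1_XX ((idxLt_bot_iff a).2 hab)))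

lemma span_G1_eq : Ideal.span (G1 n) = I1 n := by
  apply le_antisymm
  · rw [G1, Ideal.span_le]
    rintro f ((⟨a, b, hab, rfl⟩ | rfl) | ⟨a, ha, rfl⟩)
    · exact mem_I1_XX (idxLt_ne hab)
    · exact mem_I1_S
    · exact mem_I1_cubic a
  · rw [I1, Ideal.span_le]
    rintro f ((⟨a, rfl⟩ | ⟨a, b, hab, rfl⟩) | rfl)
    · rcases eq_or_ne a (botIdx n) with rfl | ha
      · exact bot_cubic_mem_spanG1
      · exact Ideal.subset_span (mem_G1_cubic ((idxLt_bot_iff a).2 ha))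
    · rcases idxLt_trichotomy a b hab with h | h
      · exact Ideal.subset_span (mem_G1_XX h)
      · rw [mul_comm]
        exact Ideal.subset_span (mem_G1_XX h)
    · exact Ideal.subset_span mem_G1_S

end Helpers6
section Helpers7
variable {d : ℕ} {n : Fin d → ℕ} [∀ i, NeZero (n i)]

/-- The point `ε · e_a`. -/
def pt (a : Idx n) (ε : ℝ) : Idx n → ℝ := fun b => if b = a then ε else 0

lemma eval_I1_zero {a : Idx n} {ε : ℝ} (hε : ε ^ 2 = 1) {f : MvPolynomial (Idx n) ℝ}
    (hf : f ∈ I1 n) : eval (pt a ε) f = 0 := by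
  have hle : I1 n ≤ RingHom.ker (MvPolynomial.eval (pt a ε)) := by
    rw [I1, Ideal.span_le]
    rintro f ((⟨b, rfl⟩ | ⟨b, c, hbc, rfl⟩) | rfl) <;> rw [SetLike.mem_coe, RingHom.mem_ker]
    · by_cases hb : b = a
      · subst hb
        simp only [map_sub, map_pow, eval_X, pt, eq_self_iff_true, if_true]
        linear_combination ε * hε
      · simp [pt, hb]
    · by_cases hb : b = a
      · subst hb
        have hc : ¬ c = b := Ne.symm hbc
        simp [pt, hc]
      · simp [pt, hb]
    · simp only [map_sub, map_sum, map_pow, eval_X, map_one]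
      have h2 : ∀ b : Idx n, (pt a ε b) ^ 2 = if b = a then ε ^ 2 else 0 := by
        intro b; by_cases hb : b = a <;> simp [pt, hb]
      rw [Finset.sum_congr rfl fun b _ => h2 b]
      rw [Finset.sum_ite_eq' Finset.univ a (fun _ => ε ^ 2), if_pos (Finset.mem_univ a),
        hε, sub_self]
  exact RingHom.mem_ker.1 (hle hf)

end Helpers7
section Helpers8
variable {d : ℕ} {n : Fin d → ℕ} [∀ i, NeZero (n i)]

lemma eval_pt_eq {a : Idx n} {ε : ℝ} {r : MvPolynomial (Idx n) ℝ}
    (hr : ∀ m ∈ r.support, m = 0 ∨ ∃ b k, 1 ≤ k ∧ k ≤ 2 ∧ m = Finsupp.single b k) :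
    eval (pt a ε) r = coeff 0 r + ε * coeff (Finsupp.single a 1) r +
      ε ^ 2 * coeff (Finsupp.single a 2) r := by
  classical
  set t : (Idx n →₀ ℕ) → ℝ :=
    fun m => coeff m r * ∏ i ∈ m.support, pt a ε i ^ m i with ht
  set T : Finset (Idx n →₀ ℕ) := {0, Finsupp.single a 1, Finsupp.single a 2} with hT
  have h01 : (0 : Idx n →₀ ℕ) ≠ Finsupp.single a 1 := by
    intro h; exact one_ne_zero (Finsupp.single_eq_zero.1 h.symm)
  have h02 : (0 : Idx n →₀ ℕ) ≠ Finsupp.single a 2 := by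
    intro h; exact two_ne_zero (Finsupp.single_eq_zero.1 h.symm)
  have h12 : Finsupp.single a 1 ≠ Finsupp.single a 2 := single_a_ne a (by norm_num)
  have key : eval (pt a ε) r = ∑ m ∈ T, t m := by
    rw [eval_eq]
    have e1 : ∑ m ∈ r.support, t m = ∑ m ∈ r.support ∪ T, t m := by
      apply Finset.sum_subset Finset.subset_union_left
      intro m _ hm
      have : coeff m r = 0 := by
        by_contra h
        exact hm (MvPolynomial.mem_support_iff.2 h)
      rw [ht]; simp [this]
    have e2 : ∑ m ∈ r.support ∪ T, t m = ∑ m ∈ T, t m := by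
      refine (Finset.sum_subset Finset.subset_union_right ?_).symm
      intro m hm hmT
      have hms : m ∈ r.support := by
        rcases Finset.mem_union.1 hm with h | h
        · exact h
        · exact absurd h hmT
      rcases hr m hms with rfl | ⟨b, k, hk1, hk2, rfl⟩
      · exact absurd (by simp [hT]) hmT
      · have hba : b ≠ a := by
          rintro rfl
          apply hmT
          interval_cases k
          · simp [hT]
          · simp [hT]
        have hk0 : k ≠ 0 := by omega
        rw [ht]
        simp only []
        rw [Finsupp.support_single_ne_zero _ hk0, Finset.prod_singleton,
          Finsupp.single_eq_same]
        have : pt a ε b = 0 := if_neg hba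
        rw [this, zero_pow hk0, mul_zero]
    rw [e1, e2]
  rw [key, hT]
  rw [Finset.sum_insert (by simp [h01, h02]), Finset.sum_insert (by simp [h12]),
    Finset.sum_singleton]
  have t0 : t 0 = coeff 0 r := by simp [ht]
  have t1 : t (Finsupp.single a 1) = ε * coeff (Finsupp.single a 1) r := by
    rw [ht]
    simp only []
    rw [Finsupp.support_single_ne_zero _ one_ne_zero, Finset.prod_singleton,
      Finsupp.single_eq_same]
    have : pt a ε a = ε := if_pos rfl
    rw [this, pow_one, mul_comm]
  have t2 : t (Finsupp.single a 2) = ε ^ 2 * coeff (Finsupp.single a 2) r := by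
    rw [ht]
    simp only []
    rw [Finsupp.support_single_ne_zero _ two_ne_zero, Finset.prod_singleton,
      Finsupp.single_eq_same]
    have : pt a ε a = ε := if_pos rfl
    rw [this, mul_comm]
  rw [t0, t1, t2]; ring

end Helpers8
section Helpers9
variable {d : ℕ} {n : Fin d → ℕ} [∀ i, NeZero (n i)]

lemma pair_le {b c : Idx n} (hbc : b ≠ c) {m : Idx n →₀ ℕ}
    (hb : b ∈ m.support) (hc : c ∈ m.support) :
    Finsupp.single b 1 + Finsupp.single c 1 ≤ m := by
  rw [Finsupp.le_def]
  intro i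
  rw [Finsupp.add_apply]
  rcases eq_or_ne b i with rfl | hbi
  · rw [Finsupp.single_eq_same, Finsupp.single_eq_of_ne' (Ne.symm hbc)]
    have := Finsupp.mem_support_iff.1 hb
    omega
  · rw [Finsupp.single_eq_of_ne' hbi, zero_add]
    rcases eq_or_ne c i with rfl | hci
    · rw [Finsupp.single_eq_same]
      have := Finsupp.mem_support_iff.1 hc
      omega
    · rw [Finsupp.single_eq_of_ne' hci]
      exact Nat.zero_le _

lemma expDeg_pair (b c : Idx n) :
    expDeg (Finsupp.single b 1 + Finsupp.single c 1) = 2 := by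
  rw [expDeg_add, expDeg_single, expDeg_single]

lemma monomial_pair_mem_I1 {b c : Idx n} (hbc : b ≠ c) (co : ℝ) :
    (monomial (Finsupp.single b 1 + Finsupp.single c 1) co : MvPolynomial (Idx n) ℝ) ∈ I1 n := by
  have : (monomial (Finsupp.single b 1 + Finsupp.single c 1) co : MvPolynomial (Idx n) ℝ)
      = C co * (X b * X c) := by
    rw [XX_eq, MvPolynomial.C_mul_monomial, mul_one]
  rw [this]
  exact Ideal.mul_mem_left _ _ (mem_I1_XX hbc)

lemma standard_coeff_zero {f : MvPolynomial (Idx n) ℝ} (hf : f ∈ I1 n)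
    (hdeg : ∀ m ∈ f.support, expDeg m ≤ 2)
    (hbot : Finsupp.single (botIdx n) 2 ∉ f.support) :
    ∀ m : Idx n →₀ ℕ, m.support.card ≤ 1 → coeff m f = 0 := by
  classical
  set F : Finset (Idx n →₀ ℕ) := f.support.filter (fun m => 2 ≤ m.support.card) with hF
  set r : MvPolynomial (Idx n) ℝ := f - ∑ m ∈ F, monomial m (coeff m f) with hrdef
  -- coefficients of r
  have hcoeff : ∀ m : Idx n →₀ ℕ,
      coeff m r = coeff m f - (if m ∈ F then coeff m f else 0) := by
    intro m
    rw [hrdef, MvPolynomial.coeff_sub, MvPolynomial.coeff_sum]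
    congr 1
    rw [Finset.sum_congr rfl (fun m' _ => MvPolynomial.coeff_monomial m m' (coeff m' f))]
    exact Finset.sum_ite_eq' F m (fun m' => coeff m' f)
  have hcoeff1 : ∀ m : Idx n →₀ ℕ, m.support.card ≤ 1 → coeff m r = coeff m f := by
    intro m hm
    rw [hcoeff m, if_neg, sub_zero]
    intro hmF
    have := (Finset.mem_filter.1 hmF).2
    omega
  -- r ∈ I1
  have hrI : r ∈ I1 n := by
    apply Ideal.sub_mem _ hf
    apply Ideal.sum_mem
    intro m hm
    obtain ⟨hmf, hcard⟩ := Finset.mem_filter.1 hm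
    obtain ⟨b, hb, c, hc, hbc⟩ := Finset.one_lt_card.1 (by omega : 1 < m.support.card)
    have hle : Finsupp.single b 1 + Finsupp.single c 1 ≤ m := pair_le hbc hb hc
    have hmeq : m = Finsupp.single b 1 + Finsupp.single c 1 := by
      refine (eq_of_le_of_expDeg_eq hle ?_).symm
      have h1 := expDeg_mono hle
      have h2 := hdeg m hmf
      rw [expDeg_pair] at h1 ⊢
      omega
    rw [hmeq]
    exact monomial_pair_mem_I1 hbc _
  -- support of r
  have hsupp : ∀ m ∈ r.support,
      m.support.card ≤ 1 ∧ expDeg m ≤ 2 ∧ m ≠ Finsupp.single (botIdx n) 2 := by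
    intro m hm
    have hne : coeff m r ≠ 0 := MvPolynomial.mem_support_iff.1 hm
    have hcard : m.support.card ≤ 1 := by
      by_contra h
      push_neg at h
      by_cases hmf : m ∈ f.support
      · have hmF : m ∈ F := Finset.mem_filter.2 ⟨hmf, by omega⟩
        rw [hcoeff m, if_pos hmF, sub_self] at hne
        exact hne rfl
      · have h0 : coeff m f = 0 := by
          by_contra hc; exact hmf (MvPolynomial.mem_support_iff.2 hc)
        have hmF : m ∉ F := fun hmF => hmf (Finset.mem_filter.1 hmF).1
        rw [hcoeff m, if_neg hmF, h0, sub_zero] at hne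
        exact hne rfl
    have hmf : m ∈ f.support := by
      rw [hcoeff1 m hcard] at hne
      exact MvPolynomial.mem_support_iff.2 hne
    exact ⟨hcard, hdeg m hmf, fun h => hbot (h ▸ hmf)⟩
  have hform : ∀ m ∈ r.support,
      m = 0 ∨ ∃ b k, 1 ≤ k ∧ k ≤ 2 ∧ m = Finsupp.single b k := by
    intro m hm
    obtain ⟨hcard, hdeg2, -⟩ := hsupp m hm
    rcases Nat.eq_or_lt_of_le hcard with h1 | h1
    · right
      obtain ⟨b, hb0, hbeq⟩ := Finsupp.card_support_eq_one.1 h1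
      have hdm : expDeg m = m b := by
        have := congrArg expDeg hbeq
        rwa [expDeg_single] at this
      exact ⟨b, m b, by omega, by omega, hbeq⟩
    · left
      exact Finsupp.support_eq_empty.1 (Finset.card_eq_zero.1 (by omega))
  have heval : ∀ (a : Idx n) (ε : ℝ), ε ^ 2 = 1 →
      coeff 0 r + ε * coeff (Finsupp.single a 1) r +
        ε ^ 2 * coeff (Finsupp.single a 2) r = 0 := by
    intro a ε hε
    rw [← eval_pt_eq hform]
    exact eval_I1_zero hε hrI
  have h1 : ∀ a : Idx n, coeff 0 r + coeff (Finsupp.single a 1) r +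
      coeff (Finsupp.single a 2) r = 0 := by
    intro a
    have := heval a 1 (by norm_num)
    simpa using this
  have h2 : ∀ a : Idx n, coeff 0 r - coeff (Finsupp.single a 1) r +
      coeff (Finsupp.single a 2) r = 0 := by
    intro a
    have := heval a (-1) (by norm_num)
    simp at this
    linarith
  have hc1 : ∀ a : Idx n, coeff (Finsupp.single a 1) r = 0 := by
    intro a; have := h1 a; have := h2 a; linarith
  have hc02 : ∀ a : Idx n, coeff 0 r + coeff (Finsupp.single a 2) r = 0 := by
    intro a; have := h1 a; have := h2 a; linarith
  have hbot2 : coeff (Finsupp.single (botIdx n) 2) r = 0 := by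
    by_contra h
    exact (hsupp _ (MvPolynomial.mem_support_iff.2 h)).2.2 rfl
  have hc0 : coeff 0 r = 0 := by
    have := hc02 (botIdx n); rw [hbot2] at this; linarith
  have hc2 : ∀ a : Idx n, coeff (Finsupp.single a 2) r = 0 := by
    intro a; have := hc02 a; linarith
  intro m hm
  rw [← hcoeff1 m hm]
  rcases Nat.eq_or_lt_of_le hm with hcm | hcm
  · obtain ⟨b, hb0, hbeq⟩ := Finsupp.card_support_eq_one.1 hcm
    have hb1 : 1 ≤ m b := Nat.one_le_iff_ne_zero.2 hb0
    rcases (by omega : m b = 1 ∨ m b = 2 ∨ 3 ≤ m b) with h | h | h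
    · rw [hbeq, h]; exact hc1 b
    · rw [hbeq, h]; exact hc2 b
    · by_contra hco
      have hmem := MvPolynomial.mem_support_iff.2 hco
      have := (hsupp m hmem).2.1
      have hdm : expDeg m = m b := by
        have := congrArg expDeg hbeq
        rwa [expDeg_single] at this
      omega
  · have : m = 0 := Finsupp.support_eq_empty.1 (Finset.card_eq_zero.1 (by omega))
    rw [this]; exact hc0

end Helpers9
section Helpers10
variable {d : ℕ} {n : Fin d → ℕ} [∀ i, NeZero (n i)]

lemma card_single_le (a : Idx n) (k : ℕ) : (Finsupp.single a k).support.card ≤ 1 := by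
  have := Finset.card_le_card (Finsupp.support_single_subset (a := a) (b := k))
  simpa using this

lemma shape_cases (m : Idx n →₀ ℕ) :
    (∃ b c, b ≠ c ∧ Finsupp.single b 1 + Finsupp.single c 1 ≤ m) ∨
    2 ≤ m (botIdx n) ∨
    (∃ a, a ≠ botIdx n ∧ 3 ≤ m a) ∨
    (m = 0 ∨ (∃ a, m = Finsupp.single a 1) ∨
      (∃ a, a ≠ botIdx n ∧ m = Finsupp.single a 2)) := by
  by_cases h2c : 2 ≤ m.support.card
  · obtain ⟨b, hb, c, hc, hbc⟩ := Finset.one_lt_card.1 (show 1 < m.support.card by omega)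
    exact Or.inl ⟨b, c, hbc, pair_le hbc hb hc⟩
  by_cases h0c : m.support.card = 0
  · exact Or.inr (Or.inr (Or.inr (Or.inl
      (Finsupp.support_eq_empty.1 (Finset.card_eq_zero.1 h0c)))))
  have h1c : m.support.card = 1 := by omega
  obtain ⟨a, ha0, haeq⟩ := Finsupp.card_support_eq_one.1 h1c
  have h1 : 1 ≤ m a := Nat.one_le_iff_ne_zero.2 ha0
  by_cases ha : a = botIdx n
  · rcases (by omega : m a = 1 ∨ 2 ≤ m a) with h2 | h2
    · exact Or.inr (Or.inr (Or.inr (Or.inr (Or.inl ⟨a, by rw [haeq, h2]⟩))))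
    · exact Or.inr (Or.inl (by rw [← ha]; exact h2))
  · rcases (by omega : m a = 1 ∨ m a = 2 ∨ 3 ≤ m a) with h2 | h2 | h2
    · exact Or.inr (Or.inr (Or.inr (Or.inr (Or.inl ⟨a, by rw [haeq, h2]⟩))))
    · exact Or.inr (Or.inr (Or.inr (Or.inr (Or.inr ⟨a, ha, by rw [haeq, h2]⟩))))
    · exact Or.inr (Or.inr (Or.inl ⟨a, ha, h2⟩))

lemma groebner_condition {f : MvPolynomial (Idx n) ℝ} (hf : f ∈ I1 n) (hf0 : f ≠ 0)
    (m : Idx n →₀ ℕ) (hm : IsLeadMon f m) :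
    ∃ g ∈ G1 n, ∃ mg, IsLeadMon g mg ∧ mg ≤ m := by
  rcases shape_cases m with ⟨b, c, hbc, hle⟩ | hb2 | ⟨a, ha, h3⟩ | hstd
  · rcases idxLt_trichotomy b c hbc with h | h
    · exact ⟨X b * X c, mem_G1_XX h, _, isLeadMon_XX b c, hle⟩
    · exact ⟨X c * X b, mem_G1_XX h, _, isLeadMon_XX c b, by rwa [add_comm]⟩
  · exact ⟨_, mem_G1_S, _, isLeadMon_S, single_le_iff.2 hb2⟩
  · exact ⟨_, mem_G1_cubic ((idxLt_bot_iff a).2 ha), _, isLeadMon_cubic a,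
      single_le_iff.2 h3⟩
  · exfalso
    have hdm : expDeg m ≤ 2 := by
      rcases hstd with rfl | ⟨a, rfl⟩ | ⟨a, -, rfl⟩
      · rw [expDeg_zero]; omega
      · rw [expDeg_single]; omega
      · rw [expDeg_single]
    have hdeg : ∀ m' ∈ f.support, expDeg m' ≤ 2 := by
      intro m' hm'
      rcases eq_or_ne m' m with rfl | hne
      · exact hdm
      · exact le_trans (grevlexLt_expDeg (hm.2 m' hm' hne)) hdm
    have hbotsup : Finsupp.single (botIdx n) 2 ∉ f.support := by
      intro hmem
      rcases eq_or_ne (Finsupp.single (botIdx n) 2) m with heq | hne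
      · rcases hstd with rfl | ⟨a, rfl⟩ | ⟨a, ha, rfl⟩
        · exact two_ne_zero (Finsupp.single_eq_zero.1 heq)
        · have := congrArg expDeg heq
          rw [expDeg_single, expDeg_single] at this
          omega
        · exact ha (single_two_injective _ _ heq).symm
      · have hlt := hm.2 _ hmem hne
        rcases hlt with hlt | ⟨hdeq, j, hj, hja⟩
        · rw [expDeg_single] at hlt; omega
        · rw [expDeg_single] at hdeq
          -- m is standard of degree 2, so m = single a 2 with a ≠ bot
          obtain ⟨a, ha, rfl⟩ : ∃ a, a ≠ botIdx n ∧ m = Finsupp.single a 2 := by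
            rcases hstd with rfl | ⟨a, rfl⟩ | ⟨a, ha, rfl⟩
            · rw [expDeg_zero] at hdeq; omega
            · rw [expDeg_single] at hdeq; omega
            · exact ⟨a, ha, rfl⟩
          have hjbot : j = botIdx n := by
            by_contra hjb
            rw [Finsupp.single_eq_of_ne' (Ne.symm hjb)] at hj
            omega
          subst hjbot
          have := hja a ((idxLt_bot_iff a).2 ha)
          rw [Finsupp.single_eq_same, Finsupp.single_eq_of_ne' (Ne.symm ha)] at this
          omega
    have hzero := standard_coeff_zero hf hdeg hbotsup m
    have hcard : m.support.card ≤ 1 := by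
      rcases hstd with rfl | ⟨a, rfl⟩ | ⟨a, -, rfl⟩
      · simp
      · exact card_single_le a 1
      · exact card_single_le a 2
    exact MvPolynomial.mem_support_iff.1 hm.1 (hzero hcard)

end Helpers10
section Helpers11
variable {d : ℕ} {n : Fin d → ℕ} [∀ i, NeZero (n i)]

lemma idxLt_asymm {a b : Idx n} (h : idxLt a b) (h' : idxLt b a) : False := by
  obtain ⟨i, hi, hmin⟩ := h
  obtain ⟨i', hi', hmin'⟩ := h'
  rcases lt_trichotomy i i' with hii | rfl | hii
  · rw [hmin' i hii] at hi
    exact lt_irrefl _ hi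
  · exact lt_asymm hi hi'
  · rw [hmin i' hii] at hi'
    exact lt_irrefl _ hi'

lemma pair_apply (b c i : Idx n) :
    ((Finsupp.single b 1 + Finsupp.single c 1 : Idx n →₀ ℕ)) i =
      (if b = i then 1 else 0) + (if c = i then 1 else 0) := by
  rw [Finsupp.add_apply, Finsupp.single_apply, Finsupp.single_apply]

lemma pair_apply_le {b c : Idx n} (hbc : b ≠ c) (i : Idx n) :
    ((Finsupp.single b 1 + Finsupp.single c 1 : Idx n →₀ ℕ)) i ≤ 1 := by
  rw [pair_apply]
  rcases eq_or_ne b i with rfl | hb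
  · rw [if_neg (fun h : c = b => hbc h.symm)]; simp
  · rw [if_neg hb]; split <;> omega

lemma not_pair_le_single {b c a : Idx n} (hbc : b ≠ c) (K : ℕ) :
    ¬ (Finsupp.single b 1 + Finsupp.single c 1 ≤ Finsupp.single a K) := by
  intro h
  have hb := Finsupp.le_def.1 h b
  have hc := Finsupp.le_def.1 h c
  rw [pair_apply, if_pos rfl] at hb
  rw [pair_apply, if_pos rfl] at hc
  have hba : b = a := by
    by_contra hba
    rw [Finsupp.single_eq_of_ne' (fun h' : a = b => hba h'.symm)] at hb
    omega
  have hca : c = a := by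
    by_contra hca
    rw [Finsupp.single_eq_of_ne' (fun h' : a = c => hca h'.symm)] at hc
    omega
  exact hbc (hba.trans hca.symm)

lemma pair_eq_pair {a b a' b' : Idx n} (hab : idxLt a b) (hab' : idxLt a' b')
    (h : Finsupp.single a' 1 + Finsupp.single b' 1 =
      Finsupp.single a 1 + Finsupp.single b 1) :
    a' = a ∧ b' = b := by
  have hne : a ≠ b := idxLt_ne hab
  have hne' : a' ≠ b' := idxLt_ne hab'
  have key : ∀ i : Idx n, (i = a' ∨ i = b') → (i = a ∨ i = b) := by
    intro i hi
    by_contra hc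
    push_neg at hc
    have := DFunLike.congr_fun h i
    rw [pair_apply, pair_apply, if_neg (fun h' : a = i => hc.1 h'.symm),
      if_neg (fun h' : b = i => hc.2 h'.symm)] at this
    rcases hi with rfl | rfl
    · rw [if_pos rfl] at this; omega
    · rw [if_pos rfl] at this
      split at this <;> omega
  rcases key a' (Or.inl rfl) with ha' | ha'
  · rcases key b' (Or.inr rfl) with hb' | hb'
    · exact absurd (ha'.trans hb'.symm) hne'
    · exact ⟨ha', hb'⟩
  · rcases key b' (Or.inr rfl) with hb' | hb'
    · subst ha'; subst hb'
      exact absurd hab (fun h' => idxLt_asymm h' hab')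
    · exact absurd (ha'.trans hb'.symm) hne'

lemma single_le_single {a b : Idx n} {K L : ℕ} (hK : K ≠ 0)
    (h : Finsupp.single a K ≤ Finsupp.single b L) : a = b ∧ K ≤ L := by
  have ha := Finsupp.le_def.1 h a
  rw [Finsupp.single_eq_same] at ha
  have hab : a = b := by
    by_contra hab
    rw [Finsupp.single_eq_of_ne' (fun h' : b = a => hab h'.symm)] at ha
    omega
  subst hab
  rw [Finsupp.single_eq_same] at ha
  exact ⟨rfl, ha⟩

lemma reduced_conditions : ∀ g ∈ G1 n,
    (∀ m, IsLeadMon g m → coeff m g = 1) ∧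
      ∀ m ∈ g.support, ∀ g' ∈ G1 n, g' ≠ g → ∀ m', IsLeadMon g' m' → ¬ m' ≤ m := by
  have LMfix : ∀ g' ∈ G1 n, ∀ m', IsLeadMon g' m' →
      (∃ a b, idxLt a b ∧ g' = X a * X b ∧ m' = Finsupp.single a 1 + Finsupp.single b 1) ∨
      (g' = (∑ a : Idx n, X a ^ 2) - 1 ∧ m' = Finsupp.single (botIdx n) 2) ∨
      (∃ a, idxLt (botIdx n) a ∧ g' = X a ^ 3 - X a ∧ m' = Finsupp.single a 3) := by
    rintro g' ((⟨a, b, hab, rfl⟩ | rfl) | ⟨a, ha, rfl⟩) m' hm'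
    · exact Or.inl ⟨a, b, hab, rfl, leadMon_unique hm' (isLeadMon_XX a b)⟩
    · exact Or.inr (Or.inl ⟨rfl, leadMon_unique hm' (isLeadMon_S (n := n))⟩)
    · exact Or.inr (Or.inr ⟨a, ha, rfl, leadMon_unique hm' (isLeadMon_cubic a)⟩)
  rintro g ((⟨a, b, hab, rfl⟩ | rfl) | ⟨a, ha, rfl⟩)
  · constructor
    · intro m hm
      rw [leadMon_unique hm (isLeadMon_XX a b), XX_eq, MvPolynomial.coeff_monomial,
        if_pos rfl]
    · intro m hmem g' hg' hne m' hm' hle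
      have hmeq : m = Finsupp.single a 1 + Finsupp.single b 1 := by
        rw [XX_eq, MvPolynomial.support_monomial, if_neg one_ne_zero] at hmem
        exact Finset.mem_singleton.1 hmem
      subst hmeq
      rcases LMfix g' hg' m' hm' with ⟨a', b', hab', rfl, rfl⟩ | ⟨rfl, rfl⟩ |
        ⟨a', ha', rfl, rfl⟩
      · have heq : Finsupp.single a' 1 + Finsupp.single b' 1 =
            Finsupp.single a 1 + Finsupp.single b 1 := by
          apply eq_of_le_of_expDeg_eq hle
          rw [expDeg_pair, expDeg_pair]
        obtain ⟨rfl, rfl⟩ := pair_eq_pair hab hab' heq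
        exact hne rfl
      · have := Finsupp.le_def.1 hle (botIdx n)
        rw [Finsupp.single_eq_same] at this
        have hp := pair_apply_le (idxLt_ne hab) (botIdx n)
        omega
      · have := expDeg_mono hle
        rw [expDeg_single, expDeg_pair] at this
        omega
  · constructor
    · intro m hm
      rw [leadMon_unique hm isLeadMon_S]
      exact coeff_S_sq _
    · intro m hmem g' hg' hne m' hm' hle
      have hdm : expDeg m ≤ 2 := by
        rcases mem_support_S hmem with rfl | ⟨c, rfl⟩
        · rw [expDeg_zero]; omega
        · rw [expDeg_single]
      rcases LMfix g' hg' m' hm' with ⟨a', b', hab', rfl, rfl⟩ | ⟨rfl, rfl⟩ |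
        ⟨a', ha', rfl, rfl⟩
      · rcases mem_support_S hmem with rfl | ⟨c, rfl⟩
        · have := expDeg_mono hle
          rw [expDeg_pair, expDeg_zero] at this
          omega
        · exact not_pair_le_single (idxLt_ne hab') 2 hle
      · exact hne rfl
      · have := expDeg_mono hle
        rw [expDeg_single] at this
        omega
  · constructor
    · intro m hm
      rw [leadMon_unique hm (isLeadMon_cubic a), coeff_cubic, if_pos rfl,
        if_neg (single_a_ne a (by norm_num))]
      norm_num
    · intro m hmem g' hg' hne m' hm' hle
      have habot : a ≠ botIdx n := Ne.symm (idxLt_ne ha)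
      rcases LMfix g' hg' m' hm' with ⟨a', b', hab', rfl, rfl⟩ | ⟨rfl, rfl⟩ |
        ⟨a', ha', rfl, rfl⟩
      · rcases mem_support_cubic hmem with rfl | rfl
        · exact not_pair_le_single (idxLt_ne hab') 3 hle
        · exact not_pair_le_single (idxLt_ne hab') 1 hle
      · rcases mem_support_cubic hmem with rfl | rfl
        · have := (single_le_single two_ne_zero hle).1
          exact habot this.symm
        · have := (single_le_single two_ne_zero hle).2
          omega
      · rcases mem_support_cubic hmem with rfl | rfl
        · obtain ⟨rfl, -⟩ := single_le_single three_ne_zero hle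
          exact hne rfl
        · have := (single_le_single three_ne_zero hle).2
          omega

end Helpers11
/-- `𝒢₁` is the reduced Gröbner basis of `I₁` w.r.t. grevlex. -/
theorem G1_isReducedGroebnerBasis :
    IsReducedGroebnerBasis (G1 n) (I1 n) := by
  refine ⟨⟨span_G1_eq, ?_⟩, reduced_conditions⟩
  intro f hf hf0 m hm
  exact groebner_condition hf hf0 m hm
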